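/- arXiv:1606.06099 — 4 statements merged into one kernel-verified Lean document; each statement's English description precedes it below -/
import Mathlib

section
/- For a full lattice Λ ⊂ ℝ^n and σ > 0, the maximum over x ∈ ℝ^n of the Λ-periodized Gaussian g_n(Λ + x; σ) is attained at x ∈ Λ, i.e., g_n(Λ + x; σ) ≤ g_n(Λ; σ) for all x ∈ ℝ^n. -/
open Real

/-- The `n`-dimensional spherical Gaussian density `g_n(x; σ)`. -/
noncomputable def gaussDensity (n : ℕ) (σ : ℝ) (v : Fin n → ℝ) : ℝ :=
  (2 * π * σ ^ 2) ^ (-(n : ℝ) / 2) * Real.exp (-(∑ i, v i ^ 2) / (2 * σ ^ 2))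

namespace PGaussB
open scoped ENNReal
set_option maxHeartbeats 1000000

lemma nat_le_sq (m : ℕ) : (m : ℝ) ≤ (m : ℝ) ^ 2 := by
  rcases Nat.eq_zero_or_pos m with h | h
  · simp [h]
  · have h1 : (1:ℝ) ≤ (m:ℝ) := by exact_mod_cast h
    nlinarith

-- summability of the 1-d discrete gaussian
lemma summable_gauss_int {β : ℝ} (hβ : 0 < β) :
    Summable fun k : ℤ => Real.exp (-β * (k : ℝ) ^ 2) := by
  have hnat : Summable fun m : ℕ => Real.exp (-β * (m : ℝ) ^ 2) := by
    have hbase : Summable fun m : ℕ => ((m : ℝ) ^ 0 * Real.exp (-β * m)) :=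
      summable_pow_mul_exp_neg_nat_mul 0 hβ
    simp only [pow_zero, one_mul] at hbase
    apply Summable.of_nonneg_of_le (fun m => (Real.exp_pos _).le) _ hbase
    intro m
    apply Real.exp_le_exp.2
    have := nat_le_sq m
    nlinarith
  apply Summable.of_nat_of_neg hnat
  simpa using hnat

lemma tsum_gauss_int_ne_top {β : ℝ} (hβ : 0 < β) :
    (∑' k : ℤ, ENNReal.ofReal (Real.exp (-β * (k : ℝ) ^ 2))) ≠ ∞ := by
  rw [← ENNReal.ofReal_tsum_of_nonneg (fun k => (Real.exp_pos _).le) (summable_gauss_int hβ)]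
  exact ENNReal.ofReal_ne_top

-- product over pi types in ℝ≥0∞
lemma tsum_pi_prod (g : ℤ → ℝ≥0∞) :
    ∀ n : ℕ, (∑' z : Fin n → ℤ, ∏ i, g (z i)) = (∑' k : ℤ, g k) ^ n := by
  intro n
  induction n with
  | zero =>
    rw [tsum_eq_single (default : Fin 0 → ℤ) (fun b hb => absurd (Subsingleton.elim b default) hb)]
    simp
  | succ m ih =>
    rw [← (Fin.consEquiv fun _ : Fin (m + 1) => ℤ).tsum_eq fun z => ∏ i, g (z i)]
    have : ∀ p : ℤ × (Fin m → ℤ),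
        (∏ i, g (((Fin.consEquiv fun _ : Fin (m + 1) => ℤ) p) i)) = g p.1 * ∏ i, g (p.2 i) := by
      intro p
      rw [Fin.prod_univ_succ]
      simp [Fin.consEquiv]
    rw [tsum_congr this, ENNReal.tsum_prod']
    simp_rw [ENNReal.tsum_mul_left, ENNReal.tsum_mul_right]
    rw [ih]
    ring

end PGaussB

namespace PGaussC
open scoped ENNReal
set_option maxHeartbeats 1000000


variable {n : ℕ} (M : Matrix (Fin n) (Fin n) ℝ)

def sqn (v : Fin n → ℝ) : ℝ := ∑ i, v i ^ 2

def lat (z : Fin n → ℤ) : Fin n → ℝ := M.mulVec fun j => (z j : ℝ)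

lemma lat_add (z w : Fin n → ℤ) : lat M (z + w) = lat M z + lat M w := by
  unfold lat
  have h : (fun j => ((z + w) j : ℝ)) = (fun j => (z j : ℝ)) + fun j => (w j : ℝ) := by
    funext j
    simp only [Pi.add_apply]
    push_cast
    ring
  rw [h, Matrix.mulVec_add]

lemma lat_sub (z w : Fin n → ℤ) : lat M (z - w) = lat M z - lat M w := by
  unfold lat
  have h : (fun j => ((z - w) j : ℝ)) = (fun j => (z j : ℝ)) - fun j => (w j : ℝ) := by
    funext j
    simp only [Pi.sub_apply]
    push_cast
    ring
  rw [h, Matrix.mulVec_sub]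

noncomputable def ee (t : ℝ) (v : Fin n → ℝ) : ℝ≥0∞ :=
  ENNReal.ofReal (Real.exp (-sqn v / t))

noncomputable def FF (t : ℝ) (x : Fin n → ℝ) : ℝ≥0∞ :=
  ∑' z : Fin n → ℤ, ee t (lat M z + x)

end PGaussC

namespace Fin2
set_option maxHeartbeats 1000000
-- scratch continuation

open PGaussC

lemma sqn_le_two_add_two {n : ℕ} (a b : Fin n → ℝ) :
    sqn a ≤ 2 * sqn (a + b) + 2 * sqn b := by
  unfold sqn
  rw [Finset.mul_sum, Finset.mul_sum, ← Finset.sum_add_distrib]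
  apply Finset.sum_le_sum
  intro i _
  simp only [Pi.add_apply]
  nlinarith [sq_nonneg (a i + 2 * b i)]

lemma sqn_mulVec_le {n : ℕ} (A : Matrix (Fin n) (Fin n) ℝ) (v : Fin n → ℝ) :
    sqn (A.mulVec v) ≤ (∑ i, ∑ j, A i j ^ 2) * sqn v := by
  unfold sqn
  rw [Finset.sum_mul]
  apply Finset.sum_le_sum
  intro i _
  have := Finset.sum_mul_sq_le_sq_mul_sq Finset.univ (fun j => A i j) v
  simpa [Matrix.mulVec, dotProduct] using this

lemma exists_alpha {n : ℕ} {M : Matrix (Fin n) (Fin n) ℝ} (hM : IsUnit M.det) :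
    ∃ α : ℝ, 0 < α ∧ ∀ v : Fin n → ℝ, α * sqn v ≤ sqn (M.mulVec v) := by
  set K : ℝ := ∑ i, ∑ j, (M⁻¹) i j ^ 2 with hK
  have hK0 : 0 ≤ K := Finset.sum_nonneg fun i _ => Finset.sum_nonneg fun j _ => sq_nonneg _
  refine ⟨1 / (K + 1), by positivity, fun v => ?_⟩
  have hv : (M⁻¹).mulVec (M.mulVec v) = v := by
    rw [Matrix.mulVec_mulVec, Matrix.nonsing_inv_mul M hM, Matrix.one_mulVec]
  have h1 : sqn v ≤ K * sqn (M.mulVec v) := by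
    calc sqn v = sqn ((M⁻¹).mulVec (M.mulVec v)) := by rw [hv]
    _ ≤ K * sqn (M.mulVec v) := sqn_mulVec_le _ _
  have h2 : 0 ≤ sqn (M.mulVec v) := Finset.sum_nonneg fun i _ => sq_nonneg _
  rw [div_mul_eq_mul_div, one_mul, div_le_iff₀ (by positivity)]
  nlinarith

end Fin2

namespace Fin3
set_option maxHeartbeats 1000000
open PGaussC Fin2
open scoped ENNReal

open PGaussB

lemma sqn_nonneg {n : ℕ} (v : Fin n → ℝ) : 0 ≤ sqn v :=
  Finset.sum_nonneg fun i _ => sq_nonneg _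

theorem FF_ne_top {n : ℕ} {M : Matrix (Fin n) (Fin n) ℝ} (hM : IsUnit M.det)
    {t : ℝ} (ht : 0 < t) (x : Fin n → ℝ) : FF M t x ≠ ∞ := by
  obtain ⟨α, hα, hαle⟩ := exists_alpha hM
  set β : ℝ := α / (2 * t) with hβdef
  have hβ : 0 < β := by positivity
  have key : ∀ z : Fin n → ℤ, ee t (lat M z + x) ≤
      ENNReal.ofReal (Real.exp (sqn x / t)) *
        ∏ i, ENNReal.ofReal (Real.exp (-β * ((z i : ℝ)) ^ 2)) := by
    intro z
    rw [← ENNReal.ofReal_prod_of_nonneg (fun i _ => (Real.exp_pos _).le),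
      ← ENNReal.ofReal_mul (Real.exp_pos _).le, ← Real.exp_sum, ← Real.exp_add]
    unfold ee
    apply ENNReal.ofReal_le_ofReal
    apply Real.exp_le_exp.2
    have h1 : sqn (lat M z) ≤ 2 * sqn (lat M z + x) + 2 * sqn x :=
      sqn_le_two_add_two _ _
    have h2 : α * (∑ i, ((z i : ℝ)) ^ 2) ≤ sqn (lat M z) := by
      have := hαle (fun j => (z j : ℝ))
      simpa [lat, sqn] using this
    have h3 : ∑ i, -β * ((z i : ℝ)) ^ 2 = -β * ∑ i, ((z i : ℝ)) ^ 2 := by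
      rw [Finset.mul_sum]
    rw [h3]
    have hz0 : 0 ≤ ∑ i, ((z i : ℝ)) ^ 2 :=
      Finset.sum_nonneg fun i _ => sq_nonneg _
    have hmain : -sqn (lat M z + x) ≤ sqn x - α / 2 * ∑ i, ((z i : ℝ)) ^ 2 := by
      linarith
    calc -sqn (lat M z + x) / t ≤ (sqn x - α / 2 * ∑ i, ((z i : ℝ)) ^ 2) / t := by
          gcongr
    _ = sqn x / t + -β * ∑ i, ((z i : ℝ)) ^ 2 := by
          rw [hβdef]
          field_simp
          ring
  have : FF M t x ≤ ENNReal.ofReal (Real.exp (sqn x / t)) *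
      ((∑' k : ℤ, ENNReal.ofReal (Real.exp (-β * (k : ℝ) ^ 2))) ^ n) := by
    rw [← tsum_pi_prod]
    rw [← ENNReal.tsum_mul_left]
    exact ENNReal.tsum_le_tsum key
  exact ne_top_of_le_ne_top
    (ENNReal.mul_ne_top ENNReal.ofReal_ne_top (ENNReal.pow_ne_top (tsum_gauss_int_ne_top hβ))) this

end Fin3

namespace Fin4
set_option maxHeartbeats 1000000
open PGaussC Fin2 Fin3
open scoped ENNReal

variable {n : ℕ} {M : Matrix (Fin n) (Fin n) ℝ}

lemma sqn_par {n : ℕ} (a b : Fin n → ℝ) :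
    sqn a + sqn b = (sqn (a + b) + sqn (a - b)) / 2 := by
  unfold sqn
  rw [← Finset.sum_add_distrib, ← Finset.sum_add_distrib, Finset.sum_div]
  apply Finset.sum_congr rfl
  intro i _
  simp only [Pi.add_apply, Pi.sub_apply]
  ring

lemma sqn_neg {n : ℕ} (v : Fin n → ℝ) : sqn (-v) = sqn v := by
  unfold sqn; simp

lemma ee_neg {t : ℝ} (v : Fin n → ℝ) : ee (n := n) t (-v) = ee t v := by
  unfold ee; rw [sqn_neg]

lemma ee_mul_ee {t : ℝ} (ht : 0 < t) (a b : Fin n → ℝ) :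
    ee t a * ee t b = ee (2 * t) (a + b) * ee (2 * t) (a - b) := by
  unfold ee
  rw [← ENNReal.ofReal_mul (Real.exp_pos _).le, ← ENNReal.ofReal_mul (Real.exp_pos _).le,
    ← Real.exp_add, ← Real.exp_add]
  congr 1
  have h := sqn_par a b
  congr 1
  field_simp
  linear_combination (-2 : ℝ) * h

/-- shift invariance -/
lemma FF_shift (t : ℝ) (w : Fin n → ℤ) (x : Fin n → ℝ) :
    FF M t (lat M w + x) = FF M t x := by
  unfold FF
  rw [← (Equiv.addRight w).tsum_eq fun z => ee t (lat M z + x)]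
  apply tsum_congr
  intro z
  simp only [Equiv.coe_addRight]
  rw [lat_add]
  congr 1
  abel

/-- the symmetrized double sum -/
noncomputable def GG (M : Matrix (Fin n) (Fin n) ℝ) (t : ℝ) (y y' : Fin n → ℝ) : ℝ≥0∞ :=
  ∑' p : (Fin n → ℤ) × (Fin n → ℤ),
    ee t (lat M (p.1 + p.2) + y) * ee t (lat M (p.1 - p.2) + y')

lemma FF_mul_FF {t : ℝ} (ht : 0 < t) (u v : Fin n → ℝ) :
    FF M t u * FF M t v = GG M (2 * t) (u + v) (u - v) := by
  unfold FF GG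
  calc (∑' z : Fin n → ℤ, ee t (lat M z + u)) * (∑' w : Fin n → ℤ, ee t (lat M w + v))
      = ∑' z : Fin n → ℤ, ee t (lat M z + u) * ∑' w : Fin n → ℤ, ee t (lat M w + v) := by
        rw [ENNReal.tsum_mul_right]
  _ = ∑' z : Fin n → ℤ, ∑' w : Fin n → ℤ, ee t (lat M z + u) * ee t (lat M w + v) := by
        exact tsum_congr fun z => ENNReal.tsum_mul_left.symm
  _ = ∑' p : (Fin n → ℤ) × (Fin n → ℤ), ee t (lat M p.1 + u) * ee t (lat M p.2 + v) := by
        rw [ENNReal.tsum_prod']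
  _ = ∑' p : (Fin n → ℤ) × (Fin n → ℤ),
        ee (2 * t) (lat M (p.1 + p.2) + (u + v)) * ee (2 * t) (lat M (p.1 - p.2) + (u - v)) := by
        apply tsum_congr
        intro p
        rw [ee_mul_ee ht]
        have h1 : lat M p.1 + u + (lat M p.2 + v) = lat M (p.1 + p.2) + (u + v) := by
          rw [lat_add]; abel
        have h2 : lat M p.1 + u - (lat M p.2 + v) = lat M (p.1 - p.2) + (u - v) := by
          rw [lat_sub]; abel
        rw [h1, h2]

end Fin4

namespace Fin5
set_option maxHeartbeats 1000000
open PGaussC Fin2 Fin3 Fin4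
open scoped ENNReal

variable {n : ℕ} {M : Matrix (Fin n) (Fin n) ℝ}

lemma GG_neg_snd (t : ℝ) (y y' : Fin n → ℝ) : GG M t y (-y') = GG M t y y' := by
  unfold GG
  rw [← (Equiv.prodComm (Fin n → ℤ) (Fin n → ℤ)).tsum_eq
    fun p : (Fin n → ℤ) × (Fin n → ℤ) =>
      ee t (lat M (p.1 + p.2) + y) * ee t (lat M (p.1 - p.2) + -y')]
  apply tsum_congr
  intro p
  simp only [Equiv.coe_prodComm, Prod.swap_prod_mk, Prod.fst_swap, Prod.snd_swap]
  have h1 : p.2 + p.1 = p.1 + p.2 := by abel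
  have h2 : lat M (p.2 - p.1) + -y' = -(lat M (p.1 - p.2) + y') := by
    rw [lat_sub, lat_sub]; abel
  rw [h1, h2, ee_neg]

def b2z (c : Bool) : ℤ := cond c 1 0

lemma b2z01 (c : Bool) : b2z c = 0 ∨ b2z c = 1 := by cases c <;> simp [b2z]

/-- parity decomposition equiv -/
def psi (n : ℕ) : ((Fin n → Bool) × (Fin n → ℤ) × (Fin n → ℤ)) ≃ ((Fin n → ℤ) × (Fin n → ℤ)) where
  toFun p := (fun i => b2z (p.1 i) + p.2.1 i + p.2.2 i, fun i => p.2.1 i - p.2.2 i)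
  invFun q := (fun i => (q.1 i + q.2 i) % 2 == 1,
    fun i => (q.1 i + q.2 i - (q.1 i + q.2 i) % 2) / 2,
    fun i => (q.1 i - q.2 i - (q.1 i + q.2 i) % 2) / 2)
  left_inv := by
    rintro ⟨c, j, k⟩
    refine Prod.ext ?_ (Prod.ext ?_ ?_) <;> funext i <;> dsimp only
    · cases hc : c i
      · simp only [b2z, hc, cond_false, beq_eq_false_iff_ne, ne_eq]
        omega
      · simp only [b2z, hc, cond_true, beq_iff_eq]
        omega
    · rcases b2z01 (c i) with h | h <;> rw [h] <;> omega
    · rcases b2z01 (c i) with h | h <;> rw [h] <;> omega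
  right_inv := by
    rintro ⟨l, m⟩
    have key : ∀ i, b2z ((l i + m i) % 2 == 1) = (l i + m i) % 2 := by
      intro i
      rcases Int.emod_two_eq (l i + m i) with h | h <;> simp [b2z, h]
    refine Prod.ext ?_ ?_ <;> funext i <;> dsimp only
    · rw [key i]; omega
    · omega

end Fin5

namespace Fin6
set_option maxHeartbeats 1000000
open PGaussC Fin2 Fin3 Fin4 Fin5
open scoped ENNReal

variable {n : ℕ} {M : Matrix (Fin n) (Fin n) ℝ}

def cInt (c : Fin n → Bool) : Fin n → ℤ := fun i => b2z (c i)

noncomputable def PP (M : Matrix (Fin n) (Fin n) ℝ) (t : ℝ) (y : Fin n → ℝ)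
    (c : Fin n → Bool) : ℝ≥0∞ :=
  ∑' j : Fin n → ℤ, ee t (lat M (cInt c + (j + j)) + y)

lemma tsum_prod_mul {α β : Type*} (A : α → ℝ≥0∞) (B : β → ℝ≥0∞) :
    ∑' p : α × β, A p.1 * B p.2 = (∑' a, A a) * ∑' b, B b := by
  rw [ENNReal.tsum_prod']
  calc ∑' a, ∑' b, A a * B b = ∑' a, A a * ∑' b, B b :=
        tsum_congr fun a => ENNReal.tsum_mul_left
  _ = (∑' a, A a) * ∑' b, B b := ENNReal.tsum_mul_right

lemma GG_coset (t : ℝ) (y y' : Fin n → ℝ) :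
    GG M t y y' = ∑ c : Fin n → Bool, PP M t y c * PP M t y' c := by
  unfold GG
  rw [← (psi n).tsum_eq fun p : (Fin n → ℤ) × (Fin n → ℤ) =>
    ee t (lat M (p.1 + p.2) + y) * ee t (lat M (p.1 - p.2) + y')]
  have hterm : ∀ q : (Fin n → Bool) × (Fin n → ℤ) × (Fin n → ℤ),
      ee t (lat M ((psi n q).1 + (psi n q).2) + y) * ee t (lat M ((psi n q).1 - (psi n q).2) + y')
      = ee t (lat M (cInt q.1 + (q.2.1 + q.2.1)) + y) *
        ee t (lat M (cInt q.1 + (q.2.2 + q.2.2)) + y') := by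
    rintro ⟨c, j, k⟩
    have h1 : ((psi n) (c, j, k)).1 + ((psi n) (c, j, k)).2 = cInt c + (j + j) := by
      funext i
      show b2z (c i) + j i + k i + (j i - k i) = cInt c i + (j i + j i)
      unfold cInt
      ring
    have h2 : ((psi n) (c, j, k)).1 - ((psi n) (c, j, k)).2 = cInt c + (k + k) := by
      funext i
      show b2z (c i) + j i + k i - (j i - k i) = cInt c i + (k i + k i)
      unfold cInt
      ring
    rw [h1, h2]
  rw [tsum_congr hterm, ENNReal.tsum_prod', tsum_fintype]
  apply Finset.sum_congr rfl
  intro c _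
  exact tsum_prod_mul (fun j => ee t (lat M (cInt c + (j + j)) + y))
    (fun k => ee t (lat M (cInt c + (k + k)) + y'))

lemma PP_le_FF (t : ℝ) (y : Fin n → ℝ) (c : Fin n → Bool) : PP M t y c ≤ FF M t y := by
  unfold PP FF
  have hinj : Function.Injective (fun j : Fin n → ℤ => cInt c + (j + j)) := by
    intro a b hab
    funext i
    have := congrFun hab i
    simp only [Pi.add_apply] at this
    omega
  exact ENNReal.tsum_comp_le_tsum_of_injective hinj fun z => ee t (lat M z + y)

/-- Cauchy–Schwarz in ℝ≥0∞ over a finset, all terms finite -/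
lemma finset_CS {ι : Type*} (s : Finset ι) (f g : ι → ℝ≥0∞)
    (hf : ∀ i ∈ s, f i ≠ ∞) (hg : ∀ i ∈ s, g i ≠ ∞) :
    (∑ i ∈ s, f i * g i) ^ 2 ≤ (∑ i ∈ s, f i ^ 2) * ∑ i ∈ s, g i ^ 2 := by
  have h1 : ∑ i ∈ s, f i * g i
      = ENNReal.ofReal (∑ i ∈ s, (f i).toReal * (g i).toReal) := by
    rw [ENNReal.ofReal_sum_of_nonneg fun i _ =>
      mul_nonneg ENNReal.toReal_nonneg ENNReal.toReal_nonneg]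
    apply Finset.sum_congr rfl
    intro i hi
    rw [ENNReal.ofReal_mul ENNReal.toReal_nonneg,
      ENNReal.ofReal_toReal (hf i hi), ENNReal.ofReal_toReal (hg i hi)]
  have h2 : ∑ i ∈ s, f i ^ 2 = ENNReal.ofReal (∑ i ∈ s, (f i).toReal ^ 2) := by
    rw [ENNReal.ofReal_sum_of_nonneg fun i _ => sq_nonneg _]
    apply Finset.sum_congr rfl
    intro i hi
    rw [← ENNReal.ofReal_toReal (hf i hi), ← ENNReal.ofReal_pow ENNReal.toReal_nonneg,
      ENNReal.ofReal_toReal (hf i hi)]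
  have h3 : ∑ i ∈ s, g i ^ 2 = ENNReal.ofReal (∑ i ∈ s, (g i).toReal ^ 2) := by
    rw [ENNReal.ofReal_sum_of_nonneg fun i _ => sq_nonneg _]
    apply Finset.sum_congr rfl
    intro i hi
    rw [← ENNReal.ofReal_toReal (hg i hi), ← ENNReal.ofReal_pow ENNReal.toReal_nonneg,
      ENNReal.ofReal_toReal (hg i hi)]
  rw [h1, h2, h3, ← ENNReal.ofReal_pow (Finset.sum_nonneg fun i _ =>
      mul_nonneg ENNReal.toReal_nonneg ENNReal.toReal_nonneg),
    ← ENNReal.ofReal_mul (Finset.sum_nonneg fun i _ => sq_nonneg _)]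
  exact ENNReal.ofReal_le_ofReal
    (Finset.sum_mul_sq_le_sq_mul_sq s (fun i => (f i).toReal) fun i => (g i).toReal)

end Fin6

namespace Fin7
set_option maxHeartbeats 1000000
open PGaussC Fin2 Fin3 Fin4 Fin5 Fin6
open scoped ENNReal

variable {n : ℕ} {M : Matrix (Fin n) (Fin n) ℝ}

lemma FF_bound (hM : IsUnit M.det) {t : ℝ} (ht : 0 < t) :
    ∃ S : ℝ≥0∞, S ≠ ∞ ∧ ∀ x : Fin n → ℝ, FF M t x ≤ S := by
  set R : ℝ := ∑ i, (∑ j, |M i j|) ^ 2 with hR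
  refine ⟨ENNReal.ofReal (Real.exp (R / t)) * FF M (2 * t) 0,
    ENNReal.mul_ne_top ENNReal.ofReal_ne_top (FF_ne_top hM (by linarith) 0), fun x => ?_⟩
  -- reduce to a fundamental-domain representative
  set u : Fin n → ℝ := (M⁻¹).mulVec x with hu
  set z : Fin n → ℤ := fun j => ⌊u j⌋ with hz
  set w : Fin n → ℝ := M.mulVec (fun j => u j - ⌊u j⌋) with hw
  have hxw : x = lat M z + w := by
    have h1 : M.mulVec u = x := by
      rw [hu, Matrix.mulVec_mulVec, Matrix.mul_nonsing_inv M hM, Matrix.one_mulVec]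
    have h2 : (fun j => (z j : ℝ)) + (fun j => u j - ⌊u j⌋) = u := by
      funext j; simp [hz]
    rw [lat, hw, ← Matrix.mulVec_add, h2, h1]
  have hsqnw : sqn w ≤ R := by
    rw [hR]
    unfold sqn
    apply Finset.sum_le_sum
    intro i _
    have habs : |w i| ≤ ∑ j, |M i j| := by
      rw [hw]
      calc |∑ j, M i j * (u j - ⌊u j⌋)| ≤ ∑ j, |M i j * (u j - ⌊u j⌋)| :=
            Finset.abs_sum_le_sum_abs _ _
      _ ≤ ∑ j, |M i j| := by
          apply Finset.sum_le_sum
          intro j _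
          rw [abs_mul]
          have h1 : |u j - ⌊u j⌋| ≤ 1 := by
            rw [abs_le]
            constructor
            · linarith [Int.sub_one_lt_floor (u j), Int.floor_le (u j)]
            · linarith [Int.lt_floor_add_one (u j), Int.floor_le (u j)]
          nlinarith [abs_nonneg (M i j)]
    calc w i ^ 2 = |w i| ^ 2 := (sq_abs _).symm
    _ ≤ (∑ j, |M i j|) ^ 2 := by
        apply pow_le_pow_left₀ (abs_nonneg _) habs
  have hshift : FF M t x = FF M t w := by rw [hxw, FF_shift]
  rw [hshift]
  unfold FF
  rw [← ENNReal.tsum_mul_left]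
  apply ENNReal.tsum_le_tsum
  intro m
  unfold ee
  rw [← ENNReal.ofReal_mul (Real.exp_pos _).le, ← Real.exp_add]
  apply ENNReal.ofReal_le_ofReal
  apply Real.exp_le_exp.2
  have h1 : sqn (lat M m) ≤ 2 * sqn (lat M m + w) + 2 * sqn w := sqn_le_two_add_two _ _
  have h2 : lat M m + 0 = lat M m := by rw [add_zero]
  rw [h2]
  have h3 : -sqn (lat M m + w) ≤ R - sqn (lat M m) / 2 := by linarith
  calc -sqn (lat M m + w) / t ≤ (R - sqn (lat M m) / 2) / t := by gcongr
  _ = R / t + -sqn (lat M m) / (2 * t) := by field_simp; ring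

end Fin7

namespace Fin8
set_option maxHeartbeats 1000000
open PGaussC Fin2 Fin3 Fin4 Fin5 Fin6 Fin7
open scoped ENNReal

variable {n : ℕ} {M : Matrix (Fin n) (Fin n) ℝ}

lemma GG_CS (hM : IsUnit M.det) {t : ℝ} (ht : 0 < t) (y y' : Fin n → ℝ) :
    (GG M t y y') ^ 2 ≤ GG M t y y * GG M t y' y' := by
  rw [GG_coset, GG_coset, GG_coset]
  have hy : ∀ c ∈ Finset.univ, PP M t y c ≠ (∞ : ℝ≥0∞) := fun c _ =>
    ne_top_of_le_ne_top (FF_ne_top hM ht y) (PP_le_FF t y c)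
  have hy' : ∀ c ∈ Finset.univ, PP M t y' c ≠ (∞ : ℝ≥0∞) := fun c _ =>
    ne_top_of_le_ne_top (FF_ne_top hM ht y') (PP_le_FF t y' c)
  have h2 : ∀ y₀ : Fin n → ℝ, ∑ c : Fin n → Bool, PP M t y₀ c * PP M t y₀ c
      = ∑ c : Fin n → Bool, PP M t y₀ c ^ 2 := by
    intro y₀
    apply Finset.sum_congr rfl
    intro c _
    rw [sq]
  rw [h2, h2]
  exact finset_CS Finset.univ (PP M t y) (PP M t y') hy hy'

theorem FF_le_FF_zero (hM : IsUnit M.det) {t : ℝ} (ht : 0 < t) (x : Fin n → ℝ) :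
    FF M t x ≤ FF M t 0 := by
  have h2t : (0:ℝ) < 2 * t := by linarith
  obtain ⟨S, hS, hSle⟩ := FF_bound (M := M) hM ht
  set s : ℝ≥0∞ := ⨆ x' : Fin n → ℝ, FF M t x' with hs
  have hstop : s ≠ ∞ := ne_top_of_le_ne_top hS (iSup_le hSle)
  have hFF0pos : FF M t 0 ≠ 0 := by
    have hle : ee t (lat M 0 + 0) ≤ FF M t 0 := ENNReal.le_tsum 0
    have : (0:ℝ≥0∞) < ee t (lat M 0 + 0) := by
      unfold ee
      exact ENNReal.ofReal_pos.2 (Real.exp_pos _)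
    exact (lt_of_lt_of_le this hle).ne'
  have hspos : s ≠ 0 := by
    intro h0
    apply hFF0pos
    have := le_iSup (fun x' : Fin n → ℝ => FF M t x') 0
    rw [← hs, h0] at this
    exact le_antisymm this bot_le
  -- key inequality
  have key : ∀ x' : Fin n → ℝ, (FF M t x') ^ 4 ≤ (FF M t 0) ^ 3 * s := by
    intro x'
    have e1 : FF M t x' * FF M t x' = GG M (2 * t) (x' + x') 0 := by
      rw [FF_mul_FF ht x' x', sub_self]
    have e2 : GG M (2 * t) (x' + x') (x' + x') = FF M t 0 * FF M t (x' + x') := by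
      rw [FF_mul_FF ht 0 (x' + x'), zero_add, zero_sub, GG_neg_snd]
    have e3 : GG M (2 * t) 0 0 = FF M t 0 * FF M t 0 := by
      rw [FF_mul_FF ht 0 0, zero_add, zero_sub, neg_zero]
    have cs := GG_CS hM h2t (x' + x') (0 : Fin n → ℝ)
    rw [← e1, e2, e3] at cs
    calc (FF M t x') ^ 4 = (FF M t x' * FF M t x') ^ 2 := by ring
    _ ≤ FF M t 0 * FF M t (x' + x') * (FF M t 0 * FF M t 0) := cs
    _ ≤ FF M t 0 * s * (FF M t 0 * FF M t 0) := by
        gcongr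
        exact le_iSup (fun x'' : Fin n → ℝ => FF M t x'') (x' + x')
    _ = (FF M t 0) ^ 3 * s := by ring
  -- s ≤ FF 0
  have hs_le : s ≤ FF M t 0 := by
    have h14 : (0:ℝ) ≤ 1 / 4 := by norm_num
    set b : ℝ≥0∞ := FF M t 0 with hb
    have hsle : s ≤ (b ^ 3 * s) ^ ((1:ℝ)/4) := by
      apply iSup_le
      intro x'
      have hx4 : FF M t x' = ((FF M t x') ^ (4:ℕ)) ^ ((1:ℝ)/4) := by
        rw [← ENNReal.rpow_natCast (FF M t x') 4, ← ENNReal.rpow_mul]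
        norm_num
      rw [hx4]
      exact ENNReal.rpow_le_rpow (key x') h14
    have hsplit : (b ^ 3 * s) ^ ((1:ℝ)/4) = b ^ ((3:ℝ)/4) * s ^ ((1:ℝ)/4) := by
      rw [ENNReal.mul_rpow_of_nonneg _ _ h14, ← ENNReal.rpow_natCast b 3,
        ← ENNReal.rpow_mul]
      norm_num
    have hsdecomp : s = s ^ ((3:ℝ)/4) * s ^ ((1:ℝ)/4) := by
      rw [← ENNReal.rpow_add _ _ hspos hstop]
      norm_num
    have hcancel : s ^ ((3:ℝ)/4) ≤ b ^ ((3:ℝ)/4) := by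
      have h1 : s ^ ((3:ℝ)/4) * s ^ ((1:ℝ)/4) ≤ b ^ ((3:ℝ)/4) * s ^ ((1:ℝ)/4) := by
        rw [← hsdecomp, ← hsplit]
        exact hsle
      have h2 : s ^ ((1:ℝ)/4) ≠ 0 :=
        (ENNReal.rpow_pos (lt_of_le_of_ne zero_le (Ne.symm hspos)) hstop).ne'
      have h3 : s ^ ((1:ℝ)/4) ≠ ∞ := ENNReal.rpow_ne_top_of_nonneg h14 hstop
      exact (ENNReal.mul_le_mul_iff_left h2 h3).mp h1
    calc s = (s ^ ((3:ℝ)/4)) ^ ((4:ℝ)/3) := by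
          rw [← ENNReal.rpow_mul]
          norm_num
    _ ≤ (b ^ ((3:ℝ)/4)) ^ ((4:ℝ)/3) := ENNReal.rpow_le_rpow hcancel (by norm_num)
    _ = b := by
          rw [← ENNReal.rpow_mul]
          norm_num
  exact le_trans (le_iSup (fun x' : Fin n → ℝ => FF M t x') x) hs_le

end Fin8

set_option maxHeartbeats 1000000 in
/-- For a full lattice `Λ ⊂ ℝⁿ` with invertible generator matrix `M`
and `σ > 0`, the maximum over `x` of the periodized Gaussian `g_n(Λ + x; σ)` is
attained at lattice points: `g_n(Λ + x; σ)` ≤ `g_n(Λ; σ)` for all `x ∈ ℝⁿ`. -/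
theorem periodized_gaussian_le_at_lattice (n : ℕ)
    (M : Matrix (Fin n) (Fin n) ℝ) (hM : IsUnit M.det) (σ : ℝ) (hσ : 0 < σ)
    (x : Fin n → ℝ) :
    (∑' z : Fin n → ℤ, gaussDensity n σ (M.mulVec (fun j => (z j : ℝ)) + x))
      ≤ ∑' z : Fin n → ℤ, gaussDensity n σ (M.mulVec (fun j => (z j : ℝ))) := by
  classical
  set t : ℝ := 2 * σ ^ 2 with htdef
  have ht : 0 < t := by positivity
  set C : ℝ := (2 * π * σ ^ 2) ^ (-(n : ℝ) / 2) with hC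
  have hC0 : 0 ≤ C := Real.rpow_nonneg (by positivity) _
  have hg : ∀ v : Fin n → ℝ, gaussDensity n σ v = C * (PGaussC.ee t v).toReal := by
    intro v
    unfold gaussDensity PGaussC.ee PGaussC.sqn
    rw [ENNReal.toReal_ofReal (Real.exp_pos _).le, htdef]
  have hlhs : (∑' z : Fin n → ℤ, gaussDensity n σ (M.mulVec (fun j => (z j : ℝ)) + x))
      = C * (PGaussC.FF M t x).toReal := by
    have : ∀ z : Fin n → ℤ, gaussDensity n σ (M.mulVec (fun j => (z j : ℝ)) + x)
        = C * (PGaussC.ee t (PGaussC.lat M z + x)).toReal := fun z => hg _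
    rw [tsum_congr this, tsum_mul_left]
    congr 1
    rw [PGaussC.FF]
    exact (ENNReal.tsum_toReal_eq fun z => ENNReal.ofReal_ne_top).symm
  have hrhs : (∑' z : Fin n → ℤ, gaussDensity n σ (M.mulVec (fun j => (z j : ℝ))))
      = C * (PGaussC.FF M t 0).toReal := by
    have : ∀ z : Fin n → ℤ, gaussDensity n σ (M.mulVec (fun j => (z j : ℝ)))
        = C * (PGaussC.ee t (PGaussC.lat M z + 0)).toReal := by
      intro z
      rw [add_zero]
      exact hg _
    rw [tsum_congr this, tsum_mul_left]
    congr 1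
    rw [PGaussC.FF]
    exact (ENNReal.tsum_toReal_eq fun z => ENNReal.ofReal_ne_top).symm
  rw [hlhs, hrhs]
  apply mul_le_mul_of_nonneg_left _ hC0
  rw [ENNReal.toReal_le_toReal (Fin3.FF_ne_top hM ht x) (Fin3.FF_ne_top hM ht 0)]
  exact Fin8.FF_le_FF_zero hM ht x
end

section
/- Let X and Y be random variables with X taking values in a finite message space M with |M| ≥ 4, Y taking values in ℝ^n with conditional densities ρ_{Y|X=m}. Suppose there exists a probability density ρ̃ on ℝ^n such that for all m ∈ M the total variational distance V(ρ_{Y|X=m}, ρ̃) = ∫|ρ_{Y|X=m}(y) − ρ̃(y)| dy is at most δ, where δ ≤ e^{-1}/2. Then the mutual information satisfies I[X; Y] ≤ 2δ log|M| − 2δ log(2δ). -/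
open MeasureTheory

/-- Mutual information `I[X;Y]` between a discrete random variable `X` with prior
`p` on a finite message space and a continuous `ℝⁿ`-valued `Y` with conditional
densities `ρ m`:  `I[X;Y] = ∫ Σ_m p(m) ρ_m(y) log(ρ_m(y)/ρ̄(y)) dy`, where
`ρ̄ = Σ_m p(m) ρ_m` is the density of `Y`. -/
noncomputable def mutualInfoDC {𝓜 : Type*} [Fintype 𝓜] (n : ℕ)
    (p : 𝓜 → ℝ) (ρ : 𝓜 → (Fin n → ℝ) → ℝ) : ℝ :=
  ∫ y : Fin n → ℝ,
    ∑ m, p m * ρ m y * Real.log (ρ m y / ∑ m', p m' * ρ m' y)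


section AuxLing
open Real

lemma eta_tangent (c x : ℝ) (hc : 0 < c) (hx : 0 ≤ x) :
    negMulLog x ≤ negMulLog c + (-log c - 1) * (x - c) := by
  rcases hx.eq_or_lt with h | hxpos
  · rw [← h]
    simp only [negMulLog, neg_mul]
    nlinarith [hc]
  · have h1 : log (c / x) ≤ c / x - 1 := log_le_sub_one_of_pos (by positivity)
    rw [log_div hc.ne' hxpos.ne'] at h1
    have h2 : x * (log c - log x) ≤ x * (c / x - 1) :=
      mul_le_mul_of_nonneg_left h1 hx
    have h3 : x * (c / x - 1) = c - x := by field_simp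
    simp only [negMulLog]
    nlinarith [h2, h3]

lemma eta_subadd (x y : ℝ) (hx : 0 ≤ x) (hy : 0 ≤ y) :
    negMulLog (x + y) ≤ negMulLog x + negMulLog y := by
  rcases hx.eq_or_lt with h | hxpos
  · simp [← h]
  rcases hy.eq_or_lt with h | hypos
  · simp [← h]
  have l1 : log x ≤ log (x + y) := log_le_log hxpos (by linarith)
  have l2 : log y ≤ log (x + y) := log_le_log hypos (by linarith)
  simp only [negMulLog]
  nlinarith [l1, l2]

lemma eta_pair (a e : ℝ) (ha : 0 ≤ a) (he : 0 ≤ e) (h1 : a + e ≤ 1) :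
    negMulLog a ≤ negMulLog (a + e) + negMulLog (1 - e) := by
  rcases eq_or_lt_of_le (show a ≤ 1 by linarith) with ha1 | ha1
  · have he0 : e = 0 := by linarith
    subst he0
    simp [ha1]
  · set l : ℝ := (1 - a - e) / (1 - a) with hl
    have h1a : 0 < 1 - a := by linarith
    have hl0 : 0 ≤ l := div_nonneg (by linarith) h1a.le
    have hl1 : l ≤ 1 := by
      rw [hl, div_le_one h1a]; linarith
    have c1 := concaveOn_negMulLog.2 (Set.mem_Ici.mpr ha) (Set.mem_Ici.mpr zero_le_one)
      hl0 (by linarith : (0:ℝ) ≤ 1 - l) (by ring)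
    have c2 := concaveOn_negMulLog.2 (Set.mem_Ici.mpr ha) (Set.mem_Ici.mpr zero_le_one)
      (by linarith : (0:ℝ) ≤ 1 - l) hl0 (by ring)
    have e1 : l • a + (1 - l) • (1:ℝ) = a + e := by
      simp only [smul_eq_mul, hl]; field_simp; ring
    have e2 : (1 - l) • a + l • (1:ℝ) = 1 - e := by
      simp only [smul_eq_mul, hl]; field_simp; ring
    rw [e1] at c1; rw [e2] at c2
    simp only [negMulLog_one, smul_eq_mul, mul_zero, add_zero] at c1 c2
    nlinarith [c1, c2]

lemma eta_reflect (x : ℝ) (h0 : 0 ≤ x) (hx : x ≤ 1/2) :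
    negMulLog (1 - x) ≤ negMulLog x := by
  rcases h0.eq_or_lt with h | hxpos
  · simp [← h]
  have h1x : 0 < 1 - x := by linarith
  -- h1 : -(1-x) * log (1-x) ≤ x
  have h1 : log (1/(1-x)) ≤ 1/(1-x) - 1 := log_le_sub_one_of_pos (by positivity)
  rw [one_div, log_inv] at h1
  have h1' : -log (1 - x) ≤ x / (1 - x) := by
    rw [div_eq_mul_inv]
    calc -log (1-x) ≤ (1-x)⁻¹ - 1 := h1
    _ = x * (1-x)⁻¹ := by field_simp; ring
  -- h2 : log x - log (1-x) ≤ x/(1-x) - 1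
  have h2 : log (x / (1-x)) ≤ x/(1-x) - 1 := log_le_sub_one_of_pos (by positivity)
  rw [log_div hxpos.ne' h1x.ne'] at h2
  have h1m : -(1-x) * log (1-x) ≤ x := by
    have := mul_le_mul_of_nonneg_left h1' h1x.le
    calc -(1-x) * log (1-x) = (1-x) * -log (1-x) := by ring
    _ ≤ (1-x) * (x / (1-x)) := this
    _ = x := by field_simp
  have h2m : (1-x) * (log x - log (1-x)) ≤ 2*x - 1 := by
    have := mul_le_mul_of_nonneg_left h2 h1x.le
    calc (1-x) * (log x - log (1-x)) ≤ (1-x) * (x/(1-x) - 1) := this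
    _ = 2*x - 1 := by field_simp; ring
  simp only [negMulLog]
  nlinarith [h1m, h2m, mul_le_mul_of_nonneg_left h2m h0,
    mul_nonneg (by linarith : (0:ℝ) ≤ 1 - 2*x) (by linarith [h1m] : 0 ≤ (1-x)*log (1-x) + x)]

lemma eta_diff_le (a b : ℝ) (ha : 0 ≤ a) (ha1 : a ≤ 1) (hb : 0 ≤ b) (hb1 : b ≤ 1) :
    negMulLog a - negMulLog b ≤ negMulLog (min |a - b| (1 - |a - b|)) := by
  rcases le_total a b with hab | hab
  · have habs : |a - b| = b - a := by rw [abs_of_nonpos (by linarith)]; ring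
    have key : negMulLog a - negMulLog b ≤ negMulLog (1 - (b - a)) := by
      have := eta_pair a (b - a) ha (by linarith) (by linarith)
      simp only [add_sub_cancel] at this
      linarith
    rw [habs]
    rcases le_total (b - a) (1/2) with hh | hh
    · rw [min_eq_left (by linarith)]
      exact key.trans (eta_reflect _ (by linarith) hh)
    · rw [min_eq_right (by linarith)]
      exact key
  · have habs : |a - b| = a - b := abs_of_nonneg (by linarith)
    have key : negMulLog a - negMulLog b ≤ negMulLog (a - b) := by
      have := eta_subadd b (a - b) hb (by linarith)
      simp only [add_sub_cancel] at this
      linarith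
    rw [habs]
    rcases le_total (a - b) (1/2) with hh | hh
    · rw [min_eq_left (by linarith)]
      exact key
    · rw [min_eq_right (by linarith)]
      refine key.trans ?_
      have := eta_reflect (1 - (a - b)) (by linarith) (by linarith)
      simpa using this

lemma discrete_bound {𝓜 : Type*} [Fintype 𝓜] (p q : 𝓜 → ℝ)
    (hp0 : ∀ m, 0 ≤ p m) (hp1 : ∑ m, p m = 1)
    (hq0 : ∀ m, 0 ≤ q m) (hq1 : ∑ m, q m = 1)
    (δ : ℝ) (hδ0 : 0 < δ) (hδe : 2 * δ ≤ Real.exp (-1)) :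
    ∑ m, negMulLog (p m) - ∑ m, negMulLog (q m) ≤
      (2*δ*Real.log (Fintype.card 𝓜) - 2*δ*Real.log (2*δ)
        - 2*δ*(Real.log (Fintype.card 𝓜) - Real.log (2*δ) - 1))
      + (Real.log (Fintype.card 𝓜) - Real.log (2*δ) - 1) * ∑ m, |q m - p m| := by
  classical
  have hne : Nonempty 𝓜 := by
    by_contra h
    rw [not_nonempty_iff] at h
    rw [Finset.univ_eq_empty, Finset.sum_empty] at hp1
    exact one_ne_zero hp1.symm
  have hcard : 0 < Fintype.card 𝓜 := Fintype.card_pos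
  set M : ℝ := (Fintype.card 𝓜 : ℝ) with hM
  have hM1 : 1 ≤ M := by rw [hM]; exact_mod_cast hcard
  have hMpos : 0 < M := by linarith
  set c : ℝ := 2*δ/M with hc
  have hcpos : 0 < c := by positivity
  have hce : c ≤ Real.exp (-1) := by
    calc c ≤ 2*δ := by
          rw [hc, div_le_iff₀ hMpos]; nlinarith
    _ ≤ _ := hδe
  have hlogc : Real.log c = Real.log (2*δ) - Real.log M := log_div (by linarith) hMpos.ne'
  set s : ℝ := Real.log M - Real.log (2*δ) - 1 with hs
  have hs0 : 0 ≤ s := by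
    have : Real.log c ≤ -1 := by
      calc Real.log c ≤ Real.log (Real.exp (-1)) := Real.log_le_log hcpos hce
      _ = -1 := Real.log_exp _
    rw [hs]; rw [hlogc] at this; linarith
  have hple : ∀ m, p m ≤ 1 := by
    intro m
    rw [← hp1]
    exact Finset.single_le_sum (fun m _ => hp0 m) (Finset.mem_univ m)
  have hqle : ∀ m, q m ≤ 1 := by
    intro m
    rw [← hq1]
    exact Finset.single_le_sum (fun m _ => hq0 m) (Finset.mem_univ m)
  have key : ∀ m, negMulLog (p m) - negMulLog (q m) ≤
      negMulLog c + s * (|q m - p m| - c) := by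
    intro m
    have h1 := eta_diff_le (p m) (q m) (hp0 m) (hple m) (hq0 m) (hqle m)
    have h2 := eta_tangent c (min |p m - q m| (1 - |p m - q m|)) hcpos
      (le_min (abs_nonneg _) (by
        have : |p m - q m| ≤ 1 := by
          rw [abs_sub_le_iff]; constructor <;> nlinarith [hp0 m, hple m, hq0 m, hqle m]
        linarith))
    have h3 : min |p m - q m| (1 - |p m - q m|) ≤ |q m - p m| := by
      rw [abs_sub_comm]
      exact min_le_left _ _
    have hslope : -Real.log c - 1 = s := by rw [hlogc, hs]; ring
    calc negMulLog (p m) - negMulLog (q m)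
        ≤ negMulLog (min |p m - q m| (1 - |p m - q m|)) := h1
      _ ≤ negMulLog c + (-Real.log c - 1) * (min |p m - q m| (1 - |p m - q m|) - c) := h2
      _ = negMulLog c + s * (min |p m - q m| (1 - |p m - q m|) - c) := by rw [hslope]
      _ ≤ negMulLog c + s * (|q m - p m| - c) := by
          have := mul_le_mul_of_nonneg_left (by linarith [h3] : min |p m - q m| (1 - |p m - q m|) - c ≤ |q m - p m| - c) hs0
          linarith
  have hsum : ∑ m, (negMulLog (p m) - negMulLog (q m)) ≤
      ∑ m, (negMulLog c + s * (|q m - p m| - c)) :=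
    Finset.sum_le_sum (fun m _ => key m)
  rw [Finset.sum_sub_distrib] at hsum
  have hrhs : ∑ m, (negMulLog c + s * (|q m - p m| - c)) =
      M * negMulLog c - s * (M * c) + s * ∑ m, |q m - p m| := by
    rw [Finset.sum_add_distrib, Finset.sum_const, ← Finset.mul_sum]
    rw [Finset.card_univ]
    push_cast
    rw [Finset.sum_sub_distrib, Finset.sum_const, Finset.card_univ]
    push_cast
    ring
  have hMc : M * c = 2*δ := by rw [hc]; field_simp
  have hMeta : M * negMulLog c = 2*δ*Real.log M - 2*δ*Real.log (2*δ) := by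
    rw [negMulLog, hlogc, hc]
    field_simp
    ring
  rw [hrhs, hMc, hMeta] at hsum
  calc ∑ m, negMulLog (p m) - ∑ m, negMulLog (q m) ≤ _ := hsum
    _ = _ := by rw [hs]; ring

lemma pointwise_bound {𝓜 : Type*} [Fintype 𝓜] (p r : 𝓜 → ℝ)
    (hp0 : ∀ m, 0 ≤ p m) (hp1 : ∑ m, p m = 1) (hr0 : ∀ m, 0 ≤ r m)
    (δ : ℝ) (hδ0 : 0 < δ) (hδe : 2 * δ ≤ Real.exp (-1)) :
    ∑ m, p m * r m * Real.log (r m / ∑ m', p m' * r m') ≤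
      (2*δ*Real.log (Fintype.card 𝓜) - 2*δ*Real.log (2*δ)
        - 2*δ*(Real.log (Fintype.card 𝓜) - Real.log (2*δ) - 1)) * (∑ m, p m * r m)
      + (Real.log (Fintype.card 𝓜) - Real.log (2*δ) - 1)
          * ∑ m, p m * |r m - ∑ m', p m' * r m'|
      + ∑ m, (p m * Real.log (p m)) * ((∑ m', p m' * r m') - r m) := by
  classical
  set C : ℝ := 2*δ*Real.log (Fintype.card 𝓜) - 2*δ*Real.log (2*δ)
        - 2*δ*(Real.log (Fintype.card 𝓜) - Real.log (2*δ) - 1) with hC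
  set s : ℝ := Real.log (Fintype.card 𝓜) - Real.log (2*δ) - 1 with hs
  set rb : ℝ := ∑ m', p m' * r m' with hrb
  have hrb0 : 0 ≤ rb :=
    Finset.sum_nonneg (fun m _ => mul_nonneg (hp0 m) (hr0 m))
  have hs0 : 0 ≤ s := by
    have h2δ : 0 < 2*δ := by linarith
    have : Real.log (2*δ) ≤ -1 := by
      calc Real.log (2*δ) ≤ Real.log (Real.exp (-1)) := Real.log_le_log h2δ hδe
      _ = -1 := Real.log_exp _
    have hcard : (1:ℝ) ≤ Fintype.card 𝓜 := by
      have : Nonempty 𝓜 := by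
        by_contra h
        rw [not_nonempty_iff] at h
        rw [Finset.univ_eq_empty, Finset.sum_empty] at hp1
        exact one_ne_zero hp1.symm
      exact_mod_cast Fintype.card_pos
    have : (0:ℝ) ≤ Real.log (Fintype.card 𝓜) := Real.log_nonneg hcard
    rw [hs]; linarith
  rcases hrb0.eq_or_lt with hrbz | hrbpos
  · -- rb = 0 case : everything vanishes
    have hz : ∀ m, p m * r m = 0 := by
      intro m
      have := (Finset.sum_eq_zero_iff_of_nonneg
        (fun m (_ : m ∈ Finset.univ) => mul_nonneg (hp0 m) (hr0 m))).mp hrbz.symm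
      exact this m (Finset.mem_univ m)
    have hL : ∑ m, p m * r m * Real.log (r m / rb) = 0 :=
      Finset.sum_eq_zero (fun m _ => by rw [hz m, zero_mul])
    have hMid : ∑ m, p m * |r m - rb| = 0 := by
      refine Finset.sum_eq_zero (fun m _ => ?_)
      rcases mul_eq_zero.mp (hz m) with h | h
      · rw [h, zero_mul]
      · rw [h, ← hrbz, sub_zero, abs_zero, mul_zero]
    have hR : ∑ m, (p m * Real.log (p m)) * (rb - r m) = 0 := by
      refine Finset.sum_eq_zero (fun m _ => ?_)
      rcases mul_eq_zero.mp (hz m) with h | h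
      · rw [h, zero_mul, zero_mul]
      · rw [h, ← hrbz, sub_zero, mul_zero]
    rw [hL, hMid, hR, ← hrbz]
    simp
  · -- rb > 0 case
    set q : 𝓜 → ℝ := fun m => p m * r m / rb with hq
    have hq0 : ∀ m, 0 ≤ q m := fun m => div_nonneg (mul_nonneg (hp0 m) (hr0 m)) hrb0
    have hq1 : ∑ m, q m = 1 := by
      rw [hq, ← Finset.sum_div, ← hrb, div_self hrbpos.ne']
    have D := discrete_bound p q hp0 hp1 hq0 hq1 δ hδ0 hδe
    -- rewrite negMulLog sums
    have hnp : ∑ m, negMulLog (p m) = -∑ m, p m * Real.log (p m) := by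
      simp [negMulLog, Finset.sum_neg_distrib]
    have hnq : ∑ m, negMulLog (q m) = -∑ m, q m * Real.log (q m) := by
      simp [negMulLog, Finset.sum_neg_distrib]
    rw [hnp, hnq] at D
    -- identity I : per-term
    have I : ∀ m, p m * r m * Real.log (r m / rb) =
        rb * (q m * Real.log (q m)) - (p m * Real.log (p m)) * r m := by
      intro m
      by_cases hpm : p m = 0
      · simp [hpm, hq]
      by_cases hrm : r m = 0
      · simp [hrm, hq]
      have hppos : 0 < p m := (hp0 m).lt_of_ne (Ne.symm hpm)
      have hrpos : 0 < r m := (hr0 m).lt_of_ne (Ne.symm hrm)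
      have hqpos : 0 < q m := by positivity
      have hlq : Real.log (q m) = Real.log (p m) + Real.log (r m) - Real.log rb := by
        rw [hq]
        rw [Real.log_div (by positivity) hrbpos.ne', Real.log_mul hpm hrm]
      have hqrb : rb * q m = p m * r m := by
        rw [hq]; field_simp
      have hlrr : Real.log (r m / rb) = Real.log (r m) - Real.log rb :=
        Real.log_div hrm hrbpos.ne'
      rw [hlrr, hlq]
      have : rb * (q m * (Real.log (p m) + Real.log (r m) - Real.log rb))
          = (rb * q m) * (Real.log (p m) + Real.log (r m) - Real.log rb) := by ring
      rw [this, hqrb]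
      ring
    -- identity II : per-term
    have II : ∀ m, p m * |r m - rb| = rb * |q m - p m| := by
      intro m
      have hqrb : rb * q m = p m * r m := by
        rw [hq]; field_simp
      have e1 : p m * (r m - rb) = rb * (q m - p m) := by
        rw [mul_sub, mul_sub, hqrb]; ring
      calc p m * |r m - rb| = |p m| * |r m - rb| := by rw [abs_of_nonneg (hp0 m)]
        _ = |p m * (r m - rb)| := (abs_mul _ _).symm
        _ = |rb * (q m - p m)| := by rw [e1]
        _ = |rb| * |q m - p m| := abs_mul _ _
        _ = rb * |q m - p m| := by rw [abs_of_nonneg hrb0]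
    have hLsum : ∑ m, p m * r m * Real.log (r m / rb) =
        rb * (∑ m, q m * Real.log (q m)) - ∑ m, (p m * Real.log (p m)) * r m := by
      rw [Finset.mul_sum, ← Finset.sum_sub_distrib]
      exact Finset.sum_congr rfl (fun m _ => I m)
    have hMidsum : ∑ m, p m * |r m - rb| = rb * ∑ m, |q m - p m| := by
      rw [Finset.mul_sum]
      exact Finset.sum_congr rfl (fun m _ => II m)
    have hRsum : ∑ m, (p m * Real.log (p m)) * (rb - r m) =
        rb * ∑ m, p m * Real.log (p m) - ∑ m, (p m * Real.log (p m)) * r m := by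
      rw [Finset.mul_sum, ← Finset.sum_sub_distrib]
      exact Finset.sum_congr rfl (fun m _ => by ring)
    rw [hLsum, hMidsum, hRsum]
    have Dm := mul_le_mul_of_nonneg_left D hrb0
    rw [← hs, ← hC] at Dm
    ring_nf at Dm ⊢
    linarith [Dm]

theorem mutual_info_bound_from_variational_distance'
    {𝓜 : Type*} [Fintype 𝓜] (h𝓜 : 4 ≤ Fintype.card 𝓜) (n : ℕ)
    (p : 𝓜 → ℝ) (hp : ∀ m, 0 ≤ p m) (hp1 : ∑ m, p m = 1)
    (ρ : 𝓜 → (Fin n → ℝ) → ℝ)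
    (hρmeas : ∀ m, Measurable (ρ m)) (hρnn : ∀ m y, 0 ≤ ρ m y)
    (hρ1 : ∀ m, ∫ y, ρ m y = 1)
    (ρtil : (Fin n → ℝ) → ℝ) (hρtmeas : Measurable ρtil)
    (hρtnn : ∀ y, 0 ≤ ρtil y) (hρt1 : ∫ y, ρtil y = 1)
    (δ : ℝ) (hδ : δ ≤ Real.exp (-1) / 2)
    (hV : ∀ m, ∫ y, |ρ m y - ρtil y| ≤ δ) :
    (∫ y : Fin n → ℝ,
      ∑ m, p m * ρ m y * Real.log (ρ m y / ∑ m', p m' * ρ m' y)) ≤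
      2 * δ * Real.log (Fintype.card 𝓜) - 2 * δ * Real.log (2 * δ) := by
  classical
  have hcard0 : 0 < Fintype.card 𝓜 := by omega
  have hne : Nonempty 𝓜 := Fintype.card_pos_iff.mp hcard0
  obtain ⟨m₀⟩ := hne
  have hδ0 : 0 ≤ δ :=
    le_trans (integral_nonneg (fun y => abs_nonneg _)) (hV m₀)
  have hρint : ∀ m, Integrable (ρ m) := by
    intro m
    by_contra h
    have := hρ1 m
    rw [integral_undef h] at this
    norm_num at this
  have hρtint : Integrable ρtil := by
    by_contra h
    rw [integral_undef h] at hρt1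
    norm_num at hρt1
  set ρb : (Fin n → ℝ) → ℝ := fun y => ∑ m, p m * ρ m y with hρbdef
  have hρbint : Integrable ρb := by
    apply integrable_finset_sum
    intro m _
    exact (hρint m).const_mul (p m)
  have hρb1 : ∫ y, ρb y = 1 := by
    rw [hρbdef]
    rw [integral_finset_sum _ (fun m _ => (hρint m).const_mul (p m))]
    simp only [integral_const_mul, hρ1, mul_one]
    exact hp1
  have hρbnn : ∀ y, 0 ≤ ρb y := fun y =>
    Finset.sum_nonneg (fun m _ => mul_nonneg (hp m) (hρnn m y))
  have hsubint : ∀ m, Integrable (fun y => |ρ m y - ρtil y|) :=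
    fun m => ((hρint m).sub hρtint).abs
  have hbtint : Integrable (fun y => |ρb y - ρtil y|) :=
    (hρbint.sub hρtint).abs
  have hΦint : Integrable (fun y => ∑ m, p m * |ρ m y - ρtil y|) := by
    apply integrable_finset_sum
    intro m _
    exact (hsubint m).const_mul (p m)
  have hbt : ∫ y, |ρb y - ρtil y| ≤ δ := by
    have hpt : ∀ y, |ρb y - ρtil y| ≤ ∑ m, p m * |ρ m y - ρtil y| := by
      intro y
      have e1 : ρb y - ρtil y = ∑ m, p m * (ρ m y - ρtil y) := by
        rw [hρbdef]
        simp only [mul_sub]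
        rw [Finset.sum_sub_distrib, ← Finset.sum_mul, hp1, one_mul]
      rw [e1]
      calc |∑ m, p m * (ρ m y - ρtil y)| ≤ ∑ m, |p m * (ρ m y - ρtil y)| :=
            Finset.abs_sum_le_sum_abs _ _
        _ = ∑ m, p m * |ρ m y - ρtil y| := by
            refine Finset.sum_congr rfl (fun m _ => ?_)
            rw [abs_mul, abs_of_nonneg (hp m)]
    calc ∫ y, |ρb y - ρtil y| ≤ ∫ y, ∑ m, p m * |ρ m y - ρtil y| :=
          integral_mono hbtint hΦint hpt
      _ = ∑ m, p m * ∫ y, |ρ m y - ρtil y| := by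
          rw [integral_finset_sum _ (fun m _ => (hsubint m).const_mul (p m))]
          simp only [integral_const_mul]
      _ ≤ ∑ m, p m * δ :=
          Finset.sum_le_sum (fun m _ => mul_le_mul_of_nonneg_left (hV m) (hp m))
      _ = δ := by rw [← Finset.sum_mul, hp1, one_mul]
  have hmbint : ∀ m, Integrable (fun y => |ρ m y - ρb y|) :=
    fun m => ((hρint m).sub hρbint).abs
  have hTV2 : ∀ m, ∫ y, |ρ m y - ρb y| ≤ 2 * δ := by
    intro m
    have hpt : ∀ y, |ρ m y - ρb y| ≤ |ρ m y - ρtil y| + |ρb y - ρtil y| := by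
      intro y
      calc |ρ m y - ρb y| ≤ |ρ m y - ρtil y| + |ρtil y - ρb y| := abs_sub_le _ _ _
        _ = |ρ m y - ρtil y| + |ρb y - ρtil y| := by rw [abs_sub_comm (ρtil y)]
    calc ∫ y, |ρ m y - ρb y|
        ≤ ∫ y, (|ρ m y - ρtil y| + |ρb y - ρtil y|) :=
          integral_mono (hmbint m) ((hsubint m).add hbtint) hpt
      _ = (∫ y, |ρ m y - ρtil y|) + ∫ y, |ρb y - ρtil y| :=
          integral_add (hsubint m) hbtint
      _ ≤ δ + δ := add_le_add (hV m) hbt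
      _ = 2 * δ := by ring
  rcases hδ0.eq_or_lt with hδz | hδpos
  · -- δ = 0 : all densities agree a.e., integrand vanishes a.e.
    have hRHS : 2 * δ * Real.log (Fintype.card 𝓜) - 2 * δ * Real.log (2 * δ) = 0 := by
      rw [← hδz]; ring
    rw [hRHS]
    have hae : ∀ m, ∀ᵐ y : (Fin n → ℝ) ∂volume, ρ m y = ρtil y := by
      intro m
      have h0 : ∫ y, |ρ m y - ρtil y| = 0 := by
        refine le_antisymm ?_ (integral_nonneg (fun y => abs_nonneg _))
        have := hV m
        rw [← hδz] at this
        exact this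
      have := (integral_eq_zero_iff_of_nonneg (fun y => abs_nonneg _) (hsubint m)).mp h0
      filter_upwards [this] with y hy
      have hy' : |ρ m y - ρtil y| = 0 := hy
      have := abs_eq_zero.mp hy'
      linarith [sub_eq_zero.mp this]
    have hall : ∀ᵐ y : (Fin n → ℝ) ∂volume, ∀ m, ρ m y = ρtil y :=
      ae_all_iff.mpr hae
    have hzero : (fun y => ∑ m, p m * ρ m y *
        Real.log (ρ m y / ∑ m', p m' * ρ m' y)) =ᵐ[volume] 0 := by
      filter_upwards [hall] with y hy
      simp only [Pi.zero_apply]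
      have hsum : (∑ m', p m' * ρ m' y) = ρtil y := by
        calc ∑ m', p m' * ρ m' y = ∑ m', p m' * ρtil y :=
              Finset.sum_congr rfl (fun m _ => by rw [hy m])
          _ = ρtil y := by rw [← Finset.sum_mul, hp1, one_mul]
      refine Finset.sum_eq_zero (fun m _ => ?_)
      rw [hy m, hsum]
      by_cases h : ρtil y = 0
      · rw [h]; ring
      · rw [div_self h, Real.log_one, mul_zero]
    rw [integral_congr_ae hzero]
    simp
  · -- δ > 0 : main case
    have h2δe : 2 * δ ≤ Real.exp (-1) := by linarith
    have hlog2δ : Real.log (2*δ) ≤ -1 := by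
      calc Real.log (2*δ) ≤ Real.log (Real.exp (-1)) :=
            Real.log_le_log (by linarith) h2δe
        _ = -1 := Real.log_exp _
    have hlM : 0 ≤ Real.log (Fintype.card 𝓜) := by
      apply Real.log_nonneg
      exact_mod_cast hcard0
    set s : ℝ := Real.log (Fintype.card 𝓜) - Real.log (2*δ) - 1 with hs
    set C : ℝ := 2*δ*Real.log (Fintype.card 𝓜) - 2*δ*Real.log (2*δ) - 2*δ*s with hC
    have hs0 : 0 ≤ s := by rw [hs]; linarith
    have hB0 : 0 ≤ 2*δ*Real.log (Fintype.card 𝓜) - 2*δ*Real.log (2*δ) := by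
      nlinarith
    have g2int : Integrable (fun y => ∑ m, p m * |ρ m y - ρb y|) :=
      integrable_finset_sum _ (fun m _ => (hmbint m).const_mul _)
    have g3int : Integrable (fun y => ∑ m, (p m * Real.log (p m)) * (ρb y - ρ m y)) :=
      integrable_finset_sum _ (fun m _ => (hρbint.sub (hρint m)).const_mul _)
    set G : (Fin n → ℝ) → ℝ := fun y =>
      C * ρb y + s * (∑ m, p m * |ρ m y - ρb y|)
        + ∑ m, (p m * Real.log (p m)) * (ρb y - ρ m y) with hG
    have hGint : Integrable G :=
      ((hρbint.const_mul C).add (g2int.const_mul s)).add g3int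
    have hIG : ∫ y, G y ≤ 2*δ*Real.log (Fintype.card 𝓜) - 2*δ*Real.log (2*δ) := by
      have e1 : ∫ y, G y = C * (∫ y, ρb y)
          + s * (∫ y, ∑ m, p m * |ρ m y - ρb y|)
          + ∫ y, ∑ m, (p m * Real.log (p m)) * (ρb y - ρ m y) := by
        have i1 : Integrable (fun y => C * ρb y) := hρbint.const_mul C
        have i2 : Integrable (fun y => s * ∑ m, p m * |ρ m y - ρb y|) :=
          g2int.const_mul s
        have i12 : Integrable
            (fun y => C * ρb y + s * ∑ m, p m * |ρ m y - ρb y|) := i1.add i2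
        rw [hG]
        rw [integral_add i12 g3int, integral_add i1 i2,
          integral_const_mul, integral_const_mul]
      have e2 : ∫ y, ∑ m, p m * |ρ m y - ρb y| ≤ 2*δ := by
        rw [integral_finset_sum _ (fun m _ => show Integrable
          (fun y => p m * |ρ m y - ρb y|) volume from (hmbint m).const_mul _)]
        simp only [integral_const_mul]
        calc ∑ m, p m * ∫ y, |ρ m y - ρb y| ≤ ∑ m, p m * (2*δ) :=
              Finset.sum_le_sum (fun m _ => mul_le_mul_of_nonneg_left (hTV2 m) (hp m))
          _ = 2*δ := by rw [← Finset.sum_mul, hp1, one_mul]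
      have e3 : ∫ y, ∑ m, (p m * Real.log (p m)) * (ρb y - ρ m y) = 0 := by
        rw [integral_finset_sum _ (fun m _ => show Integrable
          (fun y => p m * Real.log (p m) * (ρb y - ρ m y)) volume from
          (hρbint.sub (hρint m)).const_mul _)]
        refine Finset.sum_eq_zero (fun m _ => ?_)
        rw [integral_const_mul, integral_sub hρbint (hρint m), hρb1, hρ1 m]
        ring
      rw [e1, e3, hρb1, mul_one, add_zero]
      have : s * (∫ y, ∑ m, p m * |ρ m y - ρb y|) ≤ s * (2*δ) :=
        mul_le_mul_of_nonneg_left e2 hs0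
      rw [hC]
      linarith
    have hFG : ∀ y, (∑ m, p m * ρ m y * Real.log (ρ m y / ∑ m', p m' * ρ m' y)) ≤ G y := by
      intro y
      have := pointwise_bound p (fun m => ρ m y) hp hp1 (fun m => hρnn m y) δ hδpos h2δe
      simpa [hG, hC, hs, hρbdef] using this
    by_cases hFint : Integrable (fun y => ∑ m, p m * ρ m y *
        Real.log (ρ m y / ∑ m', p m' * ρ m' y))
    · calc (∫ y, ∑ m, p m * ρ m y * Real.log (ρ m y / ∑ m', p m' * ρ m' y))
          ≤ ∫ y, G y := integral_mono hFint hGint hFG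
        _ ≤ _ := hIG
    · rw [integral_undef hFint]
      exact hB0

end AuxLing

/-- Lemma 2 of Ling et al., with the explicit hypothesis `δ ≤ e⁻¹/2`:
if for every message `m` the conditional density `ρ_m` of `Y` is within variational
distance `δ ≤ e⁻¹/2` of a fixed density `ρ̃`, and `|𝓜| ≥ 4`, then
`I[X;Y] ≤ 2δ log|𝓜| − 2δ log(2δ)` (natural logarithm). -/
theorem mutual_info_bound_from_variational_distance
    {𝓜 : Type*} [Fintype 𝓜] (h𝓜 : 4 ≤ Fintype.card 𝓜) (n : ℕ)
    (p : 𝓜 → ℝ) (hp : ∀ m, 0 ≤ p m) (hp1 : ∑ m, p m = 1)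
    (ρ : 𝓜 → (Fin n → ℝ) → ℝ)
    (hρmeas : ∀ m, Measurable (ρ m)) (hρnn : ∀ m y, 0 ≤ ρ m y)
    (hρ1 : ∀ m, ∫ y, ρ m y = 1)
    (ρtil : (Fin n → ℝ) → ℝ) (hρtmeas : Measurable ρtil)
    (hρtnn : ∀ y, 0 ≤ ρtil y) (hρt1 : ∫ y, ρtil y = 1)
    (δ : ℝ) (hδ : δ ≤ Real.exp (-1) / 2)
    (hV : ∀ m, ∫ y, |ρ m y - ρtil y| ≤ δ) :
    mutualInfoDC n p ρ ≤
      2 * δ * Real.log (Fintype.card 𝓜) - 2 * δ * Real.log (2 * δ) := by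
  exact mutual_info_bound_from_variational_distance' h𝓜 n p hp hp1 ρ hρmeas hρnn hρ1
    ρtil hρtmeas hρtnn hρt1 δ hδ hV
end

section
/- Let M be a message with arbitrary distribution on a finite set M with |M| ≥ 4, let H be a random variable independent of M, and suppose Y is a random variable such that for each realization h of H, conditionally on H = h, the mutual information I[M; Y | H = h] ≤ 2ε(h)(log|M| − log(2ε(h))) whenever ε(h) ≤ e^{-1}/2, and I[M; Y | H = h] ≤ log|M| always, where ε(h) ≥ 0 is measurable in h. If E[ε(H)] ≤ e^{-1}/2, then I[M; (Y, H)] ≤ 2(e+1)·E[ε(H)]·log|M| − 2·E[ε(H)]·log(2·E[ε(H)]). -/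
open MeasureTheory


lemma mul_log_anti {a b : ℝ} (ha : 0 ≤ a) (hab : a ≤ b) (hb : b ≤ Real.exp (-1)) :
    b * Real.log b ≤ a * Real.log a := by
  rcases ha.eq_or_lt with h0 | ha'
  · rw [← h0]
    have : 0 ≤ b := h0 ▸ hab
    simp only [Real.log_zero, mul_zero, zero_mul]
    exact Real.mul_log_nonpos this (hb.trans (by rw [← Real.exp_zero]; exact Real.exp_le_exp.2 (by norm_num)))
  · have hb' : 0 < b := lt_of_lt_of_le ha' hab
    have h1 : Real.log (b / a) ≤ b / a - 1 := Real.log_le_sub_one_of_pos (by positivity)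
    have h2 : Real.log b ≤ -1 := by
      calc Real.log b ≤ Real.log (Real.exp (-1)) := Real.log_le_log hb' hb
        _ = -1 := Real.log_exp _
    have h3 : Real.log (b / a) = Real.log b - Real.log a := Real.log_div (ne_of_gt hb') (ne_of_gt ha')
    have h4 : a * (b / a) = b := by field_simp
    nlinarith [mul_le_mul_of_nonneg_left h1 ha]


/-- Theorem 1, mod-Λ_s channel, abstract form: let `M` be a message
on a finite set of cardinality `K ≥ 4` and `H` (modelled by the probability space
`Ω`) independent of `M`, so that `I[M;(Y,H)] = E_H[I[M;Y|H=h]]`; write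
`I h := I[M;Y|H=h]`.  If `I h ≤ 2ε(h)(log K − log(2ε(h)))` whenever
`ε(h) ≤ e⁻¹/2`, and `I h ≤ log K` always, with `ε ≥ 0` measurable and
`E[ε] ≤ e⁻¹/2`, then
`I[M;(Y,H)] ≤ 2(e+1)·E[ε]·log K − 2·E[ε]·log(2·E[ε])` (natural logarithm). -/
theorem info_bound_mod_lattice_channel
    {Ω : Type*} [MeasureSpace Ω] [IsProbabilityMeasure (volume : Measure Ω)]
    (K : ℕ) (hK : 4 ≤ K) (I ε : Ω → ℝ)
    (hεnn : ∀ ω, 0 ≤ ε ω) (hεmeas : Measurable ε)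
    (hεint : Integrable ε) (hIint : Integrable I)
    (hint2 : Integrable (fun ω => ε ω * Real.log (2 * ε ω)))
    (hbound1 : ∀ ω, ε ω ≤ Real.exp (-1) / 2 →
      I ω ≤ 2 * ε ω * (Real.log K - Real.log (2 * ε ω)))
    (hbound2 : ∀ ω, I ω ≤ Real.log K)
    (hE : ∫ ω, ε ω ≤ Real.exp (-1) / 2) :
    ∫ ω, I ω ≤
      2 * (Real.exp 1 + 1) * (∫ ω, ε ω) * Real.log K
        - 2 * (∫ ω, ε ω) * Real.log (2 * ∫ ω, ε ω) := by
  set c := ∫ ω, ε ω with hc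
  have hc0 : 0 ≤ c := integral_nonneg hεnn
  have hlogK : 0 ≤ Real.log K :=
    Real.log_nonneg (by exact_mod_cast le_trans (by norm_num) hK)
  set A : Set Ω := {ω | ε ω ≤ Real.exp (-1) / 2} with hAdef
  have hAm : MeasurableSet A := hεmeas measurableSet_Iic
  -- split the integral
  have hsplit : ∫ ω, I ω = (∫ ω in A, I ω) + ∫ ω in Aᶜ, I ω :=
    (integral_add_compl hAm hIint).symm
  -- integrability of the bound function
  have hGint : Integrable (fun ω => 2 * Real.log K * ε ω - 2 * (ε ω * Real.log (2 * ε ω))) :=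
    (hεint.const_mul _).sub (hint2.const_mul 2)
  -- bound on A
  have hIA : ∫ ω in A, I ω ≤
      ∫ ω in A, (2 * Real.log K * ε ω - 2 * (ε ω * Real.log (2 * ε ω))) := by
    refine setIntegral_mono_on hIint.integrableOn hGint.integrableOn hAm ?_
    intro ω hω
    have := hbound1 ω hω
    nlinarith [this]
  have heq : ∫ ω in A, (2 * Real.log K * ε ω - 2 * (ε ω * Real.log (2 * ε ω)))
      = 2 * Real.log K * (∫ ω in A, ε ω)
        - 2 * ∫ ω in A, ε ω * Real.log (2 * ε ω) := by
    rw [integral_sub (hεint.const_mul _).integrableOn (hint2.const_mul 2).integrableOn,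
      integral_const_mul, integral_const_mul]
  -- set integral of ε on A
  have hSnn : 0 ≤ ∫ ω in A, ε ω := integral_nonneg (fun ω => hεnn ω)
  have hSc : ∫ ω in A, ε ω ≤ c :=
    setIntegral_le_integral hεint (Filter.Eventually.of_forall hεnn)
  -- Jensen
  set φ : Ω → ℝ := A.indicator (fun ω => 2 * ε ω) with hφdef
  have hφint : Integrable φ := (hεint.const_mul 2).indicator hAm
  have hφeq : ∫ ω, φ ω = 2 * ∫ ω in A, ε ω := by
    rw [hφdef, integral_indicator hAm, integral_const_mul]
  have hgφ : (fun ω => φ ω * Real.log (φ ω))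
      = A.indicator (fun ω => 2 * (ε ω * Real.log (2 * ε ω))) := by
    funext ω
    by_cases h : ω ∈ A
    · simp only [hφdef, Set.indicator_of_mem h]; ring
    · simp [hφdef, Set.indicator_of_notMem h]
  have hgφint : Integrable (fun ω => φ ω * Real.log (φ ω)) := by
    rw [hgφ]; exact (hint2.const_mul 2).indicator hAm
  have hjensen : (∫ ω, φ ω) * Real.log (∫ ω, φ ω) ≤ ∫ ω, φ ω * Real.log (φ ω) :=
    Real.convexOn_mul_log.map_integral_le Real.continuous_mul_log.continuousOn isClosed_Ici
      (Filter.Eventually.of_forall fun ω => by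
        rw [hφdef, Set.mem_Ici]
        exact Set.indicator_nonneg (fun ω _ => by nlinarith [hεnn ω]) ω)
      hφint hgφint
  have hgφval : ∫ ω, φ ω * Real.log (φ ω) = 2 * ∫ ω in A, ε ω * Real.log (2 * ε ω) := by
    rw [hgφ, integral_indicator hAm, integral_const_mul]
  -- monotonicity step
  have hmono : (2 * c) * Real.log (2 * c)
      ≤ (2 * ∫ ω in A, ε ω) * Real.log (2 * ∫ ω in A, ε ω) :=
    mul_log_anti (by positivity) (by linarith) (by linarith)
  have hkey : 2 * c * Real.log (2 * c) ≤ 2 * ∫ ω in A, ε ω * Real.log (2 * ε ω) := by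
    rw [← hgφval]
    calc 2 * c * Real.log (2 * c)
        ≤ (2 * ∫ ω in A, ε ω) * Real.log (2 * ∫ ω in A, ε ω) := hmono
      _ = (∫ ω, φ ω) * Real.log (∫ ω, φ ω) := by rw [hφeq]
      _ ≤ _ := hjensen
  -- Markov
  have hμfin : (volume : Measure Ω) Aᶜ ≠ ⊤ := measure_ne_top _ _
  have hmark : Real.exp (-1) / 2 * ((volume : Measure Ω) Aᶜ).toReal ≤ c := by
    have h1 : ∫ _ω in Aᶜ, (Real.exp (-1) / 2) ≤ ∫ ω in Aᶜ, ε ω := by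
      refine setIntegral_mono_on (integrableOn_const (measure_ne_top _ _))
        hεint.integrableOn hAm.compl ?_
      intro ω hω
      exact le_of_lt (lt_of_not_ge hω)
    have h2 : ∫ ω in Aᶜ, ε ω ≤ c :=
      setIntegral_le_integral hεint (Filter.Eventually.of_forall hεnn)
    rw [setIntegral_const, smul_eq_mul, measureReal_def] at h1
    linarith [h1, h2]
  have hμc : ((volume : Measure Ω) Aᶜ).toReal ≤ 2 * Real.exp 1 * c := by
    have hee : Real.exp (-1) * Real.exp 1 = 1 := by
      rw [← Real.exp_add]; norm_num
    have h21 : (2 * Real.exp 1) * (Real.exp (-1) / 2 * ((volume : Measure Ω) Aᶜ).toReal)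
        = ((volume : Measure Ω) Aᶜ).toReal := by
      rw [show (2 * Real.exp 1) * (Real.exp (-1) / 2 * ((volume : Measure Ω) Aᶜ).toReal)
          = (Real.exp (-1) * Real.exp 1) * ((volume : Measure Ω) Aᶜ).toReal by ring, hee, one_mul]
    calc ((volume : Measure Ω) Aᶜ).toReal
        = (2 * Real.exp 1) * (Real.exp (-1) / 2 * ((volume : Measure Ω) Aᶜ).toReal) := h21.symm
      _ ≤ (2 * Real.exp 1) * c := by
          apply mul_le_mul_of_nonneg_left hmark (by positivity)
      _ = 2 * Real.exp 1 * c := by ring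
  -- bound on Aᶜ
  have hIc : ∫ ω in Aᶜ, I ω ≤ ((volume : Measure Ω) Aᶜ).toReal * Real.log K := by
    calc ∫ ω in Aᶜ, I ω ≤ ∫ _ω in Aᶜ, Real.log K :=
          setIntegral_mono_on hIint.integrableOn
            (integrableOn_const (measure_ne_top _ _)) hAm.compl
            (fun ω _ => hbound2 ω)
      _ = ((volume : Measure Ω) Aᶜ).toReal * Real.log K := by
          rw [setIntegral_const, smul_eq_mul, measureReal_def]
  -- combine
  have hμcK : ((volume : Measure Ω) Aᶜ).toReal * Real.log K
      ≤ 2 * Real.exp 1 * c * Real.log K := mul_le_mul_of_nonneg_right hμc hlogK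
  have hScK : 2 * Real.log K * (∫ ω in A, ε ω) ≤ 2 * Real.log K * c := by
    apply mul_le_mul_of_nonneg_left hSc; positivity
  rw [hsplit]
  have := hIA.trans_eq heq
  nlinarith [this, hIc, hμcK, hScK, hkey]
end

section
/- Let M be a message with arbitrary distribution on a finite set M with |M| ≥ 4, let H be independent of M, and suppose that conditionally on H = h, I[M; Y | H = h] ≤ 8ε(h)(log|M| − log(8ε(h))) whenever ε(h) ≤ 1/(8e), and I[M; Y | H = h] ≤ log|M| always, where ε(h) ≥ 0. If E := E[ε(H)] ≤ 1/(8e), then I[M; (Y, H)] ≤ 8(1+e)·E·log|M| − 8E·log(8E). -/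
open MeasureTheory

/-- Tangent-line inequality for the convex function `x ↦ x * log (8x)`. -/
lemma tangent_xlog (a x : ℝ) (ha : 0 < a) (hx : 0 ≤ x) :
    a * Real.log (8 * a) + (Real.log (8 * a) + 1) * (x - a) ≤ x * Real.log (8 * x) := by
  rcases eq_or_lt_of_le hx with h0 | hxpos
  · subst h0
    have : a * Real.log (8 * a) + (Real.log (8 * a) + 1) * (0 - a) = -a := by ring
    rw [this]
    simp
    linarith
  · have h1 : Real.log (a / x) ≤ a / x - 1 := Real.log_le_sub_one_of_pos (by positivity)
    have h2 : x * Real.log (a / x) ≤ a - x := by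
      have := mul_le_mul_of_nonneg_left h1 (le_of_lt hxpos)
      calc x * Real.log (a / x) ≤ x * (a / x - 1) := this
        _ = a - x := by field_simp
    have h3 : Real.log (a / x) = Real.log (8 * a) - Real.log (8 * x) := by
      rw [Real.log_div (ne_of_gt ha) (ne_of_gt hxpos),
        Real.log_mul (by norm_num) (ne_of_gt ha),
        Real.log_mul (by norm_num) (ne_of_gt hxpos)]
      ring
    nlinarith [h2, h3]

/-- `x ↦ x * log (8x)` is antitone on `[0, 1/(8e)]`. -/
lemma xlog_anti (u v : ℝ) (hu : 0 ≤ u) (huv : u ≤ v) (hv : v ≤ 1 / (8 * Real.exp 1)) :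
    v * Real.log (8 * v) ≤ u * Real.log (8 * u) := by
  rcases eq_or_lt_of_le (hu.trans huv) with h0 | hvpos
  · have : u = 0 := le_antisymm (huv.trans h0.symm.le) hu
    simp [this, ← h0]
  · have key := tangent_xlog v u hvpos hu
    have he : (0:ℝ) < Real.exp 1 := Real.exp_pos 1
    have hv1 : v * (8 * Real.exp 1) ≤ 1 := (le_div_iff₀ (by positivity)).mp hv
    have h8v : Real.log (8 * v) ≤ -1 := by
      have h1 : 8 * v ≤ Real.exp (-1) := by
        rw [Real.exp_neg, inv_eq_one_div, le_div_iff₀ he]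
        nlinarith
      calc Real.log (8 * v) ≤ Real.log (Real.exp (-1)) :=
            Real.log_le_log (by positivity) h1
        _ = -1 := Real.log_exp _
    nlinarith [key, h8v, huv]

/-- Theorem 2, discrete Gaussian coset coding, abstract form: let `M`
be a message on a finite set of cardinality `K ≥ 4` and `H` (modelled by the
probability space `Ω`) independent of `M`, so that `I[M;(Y,H)] = E_H[I[M;Y|H=h]]`;
write `I h := I[M;Y|H=h]`.  If `I h ≤ 8ε(h)(log K − log(8ε(h)))` whenever
`ε(h) ≤ 1/(8e)`, and `I h ≤ log K` always, with `ε ≥ 0` measurable and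
`E := E[ε] ≤ 1/(8e)`, then
`I[M;(Y,H)] ≤ 8(1+e)·E·log K − 8E·log(8E)` (natural logarithm). -/
theorem info_bound_discrete_gaussian_coset
    {Ω : Type*} [MeasureSpace Ω] [IsProbabilityMeasure (volume : Measure Ω)]
    (K : ℕ) (hK : 4 ≤ K) (I ε : Ω → ℝ)
    (hεnn : ∀ ω, 0 ≤ ε ω) (hεmeas : Measurable ε)
    (hεint : Integrable ε) (hIint : Integrable I)
    (hint2 : Integrable (fun ω => ε ω * Real.log (8 * ε ω)))
    (hbound1 : ∀ ω, ε ω ≤ 1 / (8 * Real.exp 1) →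
      I ω ≤ 8 * ε ω * (Real.log K - Real.log (8 * ε ω)))
    (hbound2 : ∀ ω, I ω ≤ Real.log K)
    (hE : ∫ ω, ε ω ≤ 1 / (8 * Real.exp 1)) :
    ∫ ω, I ω ≤
      8 * (1 + Real.exp 1) * (∫ ω, ε ω) * Real.log K
        - 8 * (∫ ω, ε ω) * Real.log (8 * ∫ ω, ε ω) := by
  have he : (0:ℝ) < Real.exp 1 := Real.exp_pos 1
  set c : ℝ := 1 / (8 * Real.exp 1) with hc
  set ε' : Ω → ℝ := fun ω => if ε ω ≤ c then ε ω else 0 with hε'def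
  set φ : Ω → ℝ := fun ω => ε' ω * Real.log (8 * ε' ω) with hφdef
  have hlogK : (1:ℝ) ≤ Real.log K := by
    have : Real.exp 1 ≤ (K : ℝ) := by
      have : (4:ℝ) ≤ (K:ℝ) := by exact_mod_cast hK
      nlinarith [Real.exp_one_lt_d9]
    calc (1:ℝ) = Real.log (Real.exp 1) := (Real.log_exp 1).symm
      _ ≤ Real.log K := Real.log_le_log he this
  have hlogK0 : (0:ℝ) ≤ Real.log K := by linarith
  -- measurability and integrability
  have hε'meas : Measurable ε' :=
    Measurable.ite (measurableSet_le hεmeas measurable_const) hεmeas measurable_const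
  have hε'nn : ∀ ω, 0 ≤ ε' ω := fun ω => by
    simp only [hε'def]; split; exacts [hεnn ω, le_rfl]
  have hε'le : ∀ ω, ε' ω ≤ ε ω := fun ω => by
    simp only [hε'def]; split; exacts [le_rfl, hεnn ω]
  have hε'int : Integrable ε' :=
    hεint.mono hε'meas.aestronglyMeasurable (ae_of_all _ fun ω => by
      simp only [Real.norm_eq_abs, abs_of_nonneg (hε'nn ω), abs_of_nonneg (hεnn ω)]
      exact hε'le ω)
  have hφmeas : Measurable φ :=
    hε'meas.mul (Real.measurable_log.comp (measurable_const.mul hε'meas))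
  have hφeq : ∀ ω, φ ω = if ε ω ≤ c then ε ω * Real.log (8 * ε ω) else 0 := by
    intro ω
    simp only [hφdef, hε'def]
    split <;> simp
  have hφint : Integrable φ :=
    hint2.mono hφmeas.aestronglyMeasurable (ae_of_all _ fun ω => by
      rw [hφeq ω]; split
      · exact le_rfl
      · simp only [norm_zero, Real.norm_eq_abs, abs_mul]
        positivity)
  -- pointwise bound
  have hpt : ∀ ω, I ω ≤ (8 * (1 + Real.exp 1) * Real.log K) * ε ω - 8 * φ ω := by
    intro ω
    rw [hφeq ω]
    by_cases h : ε ω ≤ c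
    · rw [if_pos h]
      have h2 := hbound1 ω h
      have h3 : 0 ≤ Real.exp 1 * ε ω * Real.log K :=
        mul_nonneg (mul_nonneg he.le (hεnn ω)) hlogK0
      nlinarith [h2, h3]
    · rw [if_neg h]
      push_neg at h
      have h1 : 1 < 8 * Real.exp 1 * ε ω := by
        rw [hc, div_lt_iff₀ (by positivity)] at h
        nlinarith
      nlinarith [hbound2 ω, hlogK0, hεnn ω]
  have hRHSint : Integrable (fun ω => (8 * (1 + Real.exp 1) * Real.log K) * ε ω - 8 * φ ω) :=
    (hεint.const_mul _).sub (hφint.const_mul _)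
  have step1 : ∫ ω, I ω ≤
      (8 * (1 + Real.exp 1) * Real.log K) * (∫ ω, ε ω) - 8 * ∫ ω, φ ω := by
    calc ∫ ω, I ω ≤ ∫ ω, ((8 * (1 + Real.exp 1) * Real.log K) * ε ω - 8 * φ ω) :=
          integral_mono hIint hRHSint hpt
      _ = (8 * (1 + Real.exp 1) * Real.log K) * (∫ ω, ε ω) - 8 * ∫ ω, φ ω := by
          rw [integral_sub (hεint.const_mul _) (hφint.const_mul _),
            integral_const_mul, integral_const_mul]
  -- Jensen part: ∫ φ ≥ E log(8E)
  set E : ℝ := ∫ ω, ε ω with hEdef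
  set E' : ℝ := ∫ ω, ε' ω with hE'def
  have hE'nn : 0 ≤ E' := integral_nonneg hε'nn
  have hE'leE : E' ≤ E := integral_mono hε'int hεint hε'le
  have hEnn : 0 ≤ E := hE'nn.trans hE'leE
  have hjensen : E' * Real.log (8 * E') ≤ ∫ ω, φ ω := by
    rcases eq_or_lt_of_le hE'nn with h0 | hE'pos
    · -- E' = 0 : ε' = 0 a.e., so ∫ φ = 0
      have hae : ε' =ᵐ[volume] 0 :=
        (integral_eq_zero_iff_of_nonneg hε'nn hε'int).mp h0.symm
      have : ∫ ω, φ ω = 0 := by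
        rw [integral_congr_ae (g := fun _ => (0:ℝ))
          (hae.mono fun ω hω => by simp [hφdef, hω])]
        simp
      rw [this, ← h0]
      simp
    · have hptj : ∀ ω, E' * Real.log (8 * E') +
          (Real.log (8 * E') + 1) * (ε' ω - E') ≤ φ ω :=
        fun ω => tangent_xlog E' (ε' ω) hE'pos (hε'nn ω)
      have hLint : Integrable (fun ω => E' * Real.log (8 * E') +
          (Real.log (8 * E') + 1) * (ε' ω - E')) := by
        exact (integrable_const _).add (((hε'int.sub (integrable_const _)).const_mul _))
      have := integral_mono hLint hφint hptj
      have hfun : (fun ω => E' * Real.log (8 * E') + (Real.log (8 * E') + 1) * (ε' ω - E'))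
          = fun ω => (Real.log (8 * E') + 1) * ε' ω +
              (E' * Real.log (8 * E') - (Real.log (8 * E') + 1) * E') := by
        funext ω; ring
      have hcalc : ∫ ω, (E' * Real.log (8 * E') +
          (Real.log (8 * E') + 1) * (ε' ω - E')) = E' * Real.log (8 * E') := by
        rw [hfun, integral_add (hε'int.const_mul _) (integrable_const _),
          integral_const_mul, integral_const]
        simp only [measure_univ, probReal_univ, ENNReal.toReal_one, one_smul, ← hE'def]
        ring
      rw [hcalc] at this
      exact this
  have hanti : E * Real.log (8 * E) ≤ E' * Real.log (8 * E') :=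
    xlog_anti E' E hE'nn hE'leE hE
  calc ∫ ω, I ω ≤ (8 * (1 + Real.exp 1) * Real.log K) * E - 8 * ∫ ω, φ ω := step1
    _ ≤ 8 * (1 + Real.exp 1) * E * Real.log K - 8 * (E * Real.log (8 * E)) := by
        nlinarith [hjensen, hanti]
    _ = 8 * (1 + Real.exp 1) * E * Real.log K - 8 * E * Real.log (8 * E) := by ring
end
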